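/- Let a, b, c be real numbers with a < 0, b > 0, c > 0 and b ≠ c. Then ∑_{n=0}^∞ (n+1)^2·(a)_n (b)_n (c)_n / ((b+1)_n (c+1)_n · n!) = (b c Γ(1−a)/(c−b)) · [ (1−b)^2 Γ(b)/Γ(1−a+b) − (1−c)^2 Γ(c)/Γ(1−a+c) ]. -/

import Mathlib

noncomputable section

/-- Pochhammer symbol `(x)_n` for a complex number. -/
def poch (x : ℂ) (n : ℕ) : ℂ := ∏ k ∈ Finset.range n, (x + k)

/-- Pochhammer symbol `(x)_n` for a real number. -/
def pochR (x : ℝ) (n : ℕ) : ℝ := ∏ k ∈ Finset.range n, (x + k)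

/-- The open unit disc in `ℂ`. -/
def unitDisc : Set ℂ := {z : ℂ | ‖z‖ < 1}

/-- The class `A` of analytic functions on the unit disc normalized by
`f 0 = 0`, `f' 0 = 1` (i.e. `f z = z + ∑_{n≥2} a_n z^n`). -/
def memA (f : ℂ → ℂ) : Prop :=
  AnalyticOnNhd ℂ f unitDisc ∧ f 0 = 0 ∧ deriv f 0 = 1

/-- The class `S*_λ`. -/
def starlikeOrder (lam : ℝ) (f : ℂ → ℂ) : Prop :=
  memA f ∧ (∀ z ∈ unitDisc, z ≠ 0 → f z ≠ 0) ∧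
    ∀ z ∈ unitDisc, z ≠ 0 → ‖z * deriv f z / f z - 1‖ < lam

/-- The class `C_λ`: `f ∈ A` and `z ↦ z f'(z)` is in `S*_λ`. -/
def convexOrder (lam : ℝ) (f : ℂ → ℂ) : Prop :=
  memA f ∧ starlikeOrder lam (fun z => z * deriv f z)

/-- Uniformly convex functions. -/
def memUCV (f : ℂ → ℂ) : Prop :=
  memA f ∧ ∀ z ∈ unitDisc, deriv f z ≠ 0 ∧
    ‖z * deriv (deriv f) z / deriv f z‖ <
      (1 + z * deriv (deriv f) z / deriv f z).re

/-- The class `S_p`. -/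
def memSp (f : ℂ → ℂ) : Prop :=
  memA f ∧ (∀ z ∈ unitDisc, z ≠ 0 → f z ≠ 0) ∧
    ∀ z ∈ unitDisc, z ≠ 0 →
      ‖z * deriv f z / f z - 1‖ < (z * deriv f z / f z).re

/-- The class `R(β)`. -/
def memR (beta : ℝ) (f : ℂ → ℂ) : Prop :=
  memA f ∧ ∃ η ∈ Set.Ioo (-(Real.pi / 2)) (Real.pi / 2),
    ∀ z ∈ unitDisc, 0 < (Complex.exp (η * Complex.I) * (deriv f z - beta)).re

/-- The class `S` of univalent functions in `A`. -/
def memS (f : ℂ → ℂ) : Prop :=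
  memA f ∧ Set.InjOn f unitDisc

/-- Taylor coefficient of `f` at the origin. -/
def coeffAt (f : ℂ → ℂ) (n : ℕ) : ℂ := iteratedDeriv n f 0 / n.factorial

/-- Clausen's hypergeometric function `₃F₂(a,b,c;d,e;z)`. -/
def hyp32 (a b c d e z : ℂ) : ℂ :=
  ∑' n : ℕ, poch a n * poch b n * poch c n /
    (poch d n * poch e n * (n.factorial : ℂ)) * z ^ n

/-- The operator `I_{a,b,c}`: Hadamard product of `z ₃F₂(a,b,c;b+1,c+1;z)` with `f`. -/
def opI (a : ℂ) (b c : ℝ) (f : ℂ → ℂ) (z : ℂ) : ℂ :=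
  z + ∑' n : ℕ,
    (poch a (n + 1) * poch (b : ℂ) (n + 1) * poch (c : ℂ) (n + 1) /
      (poch ((b : ℂ) + 1) (n + 1) * poch ((c : ℂ) + 1) (n + 1) *
        ((n + 1).factorial : ℂ))) * coeffAt f (n + 2) * z ^ (n + 2)

lemma pochR_zero (x : ℝ) : pochR x 0 = 1 := by simp [pochR]

lemma pochR_succ (x : ℝ) (n : ℕ) : pochR x (n + 1) = pochR x n * (x + n) := by
  simp [pochR, Finset.prod_range_succ]

lemma pochR_succ' (x : ℝ) (n : ℕ) : pochR x (n + 1) = x * pochR (x + 1) n := by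
  induction n with
  | zero => simp [pochR_zero, pochR_succ]
  | succ n ih => rw [pochR_succ, ih, pochR_succ]; push_cast; ring

lemma pochR_pos {x : ℝ} (hx : 0 < x) (n : ℕ) : 0 < pochR x n := by
  refine Finset.prod_pos fun k _ => ?_
  positivity

lemma pochR_abs_div_fact_le (a : ℝ) (ha : a < 0) :
    ∃ C : ℝ, 0 < C ∧ ∀ n : ℕ,
      |pochR a n| / n.factorial ≤ C * ((n : ℝ) + 1) ^ (-(1 + min 1 (-a))) := by
  set p : ℝ := 1 + min 1 (-a) with hp
  have hδ : 0 < min 1 (-a) := lt_min one_pos (by linarith)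
  have hp1 : 1 ≤ p := by simp only [hp]; linarith
  have hpa : p ≤ 1 - a := by
    have h := min_le_right (1:ℝ) (-a)
    simp only [hp]; linarith
  set u : ℕ → ℝ := fun n => |pochR a n| / n.factorial with hu
  set v : ℕ → ℝ := fun n => ((n : ℝ) + 1) ^ (-p) with hv
  have hvpos : ∀ n, 0 < v n := fun n => Real.rpow_pos_of_pos (by positivity) _
  have hupos : ∀ n, 0 ≤ u n := fun n => by
    have h : (0:ℝ) < n.factorial := by exact_mod_cast n.factorial_pos
    exact div_nonneg (abs_nonneg _) h.le
  set N : ℕ := ⌈-a⌉₊ with hN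
  have key : ∀ n : ℕ, N ≤ n → u (n + 1) ≤ u n / v n * v (n + 1) := by
    intro n hn
    have han : 0 ≤ a + n := by
      have h1 : (-a : ℝ) ≤ N := Nat.le_ceil _
      have h2 : (-a : ℝ) ≤ n := h1.trans (by exact_mod_cast hn)
      linarith
    have hfact : (0:ℝ) < n.factorial := by exact_mod_cast n.factorial_pos
    have hratio : (a + n) / ((n : ℝ) + 1) ≤ (((n:ℝ) + 1) / ((n:ℝ) + 2)) ^ p := by
      have hB : 1 + p * (-(1 / ((n:ℝ) + 2))) ≤ (1 + (-(1 / ((n:ℝ)+2)))) ^ p := by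
        refine one_add_mul_self_le_rpow_one_add ?_ hp1
        have h2 : (0:ℝ) < (n:ℝ) + 2 := by positivity
        rw [neg_le, neg_neg, div_le_one h2]; linarith
      have hEq : (1 : ℝ) + (-(1 / ((n:ℝ)+2))) = ((n:ℝ)+1)/((n:ℝ)+2) := by
        field_simp
        ring
      rw [hEq] at hB
      refine le_trans ?_ hB
      rw [div_le_iff₀ (by positivity : (0:ℝ) < (n:ℝ)+1)]
      have h1 : p / ((n:ℝ)+2) ≤ (1 - a)/((n:ℝ)+1) := by
        apply div_le_div₀ (by linarith) hpa (by positivity)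
        linarith
      have h2 : (1 : ℝ) - (1-a)/((n:ℝ)+1) ≤ 1 - p/((n:ℝ)+2) := by linarith
      calc a + (n:ℝ) = (1 - (1-a)/((n:ℝ)+1)) * ((n:ℝ)+1) := by field_simp; ring
        _ ≤ (1 - p/((n:ℝ)+2)) * ((n:ℝ)+1) := by
            apply mul_le_mul_of_nonneg_right h2 (by positivity)
        _ = (1 + p * (-(1 / ((n:ℝ)+2)))) * ((n:ℝ)+1) := by ring
    have hu1 : u (n+1) = u n * ((a + n) / ((n:ℝ)+1)) := by
      simp only [hu]
      rw [pochR_succ, abs_mul, abs_of_nonneg han, Nat.factorial_succ, div_mul_div_comm]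
      push_cast
      rw [mul_comm ((n:ℝ)+1) (n.factorial : ℝ)]
    have hv1 : v (n+1) = v n * ((((n:ℝ)+1)/((n:ℝ)+2)) ^ p) := by
      have h1 : (0:ℝ) < (n:ℝ)+1 := by positivity
      have h2 : (0:ℝ) < (n:ℝ)+2 := by positivity
      have e1 : ((n:ℝ)+1)^(-p) * (((n:ℝ)+1)^p) = 1 := by
        rw [← Real.rpow_add h1]; simp
      have e2 : ((n+1:ℕ):ℝ) + 1 = (n:ℝ)+2 := by push_cast; ring
      simp only [hv, e2]
      rw [Real.div_rpow h1.le h2.le, Real.rpow_neg h2.le, div_eq_mul_inv, ← mul_assoc, e1,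
        one_mul]
    rw [hu1, hv1]
    have hvne : v n ≠ 0 := (hvpos n).ne'
    have hre : u n / v n * (v n * ((((n:ℝ)+1)/((n:ℝ)+2)) ^ p)) =
        u n * ((((n:ℝ)+1)/((n:ℝ)+2)) ^ p) := by
      field_simp
    rw [hre]
    exact mul_le_mul_of_nonneg_left hratio (hupos n)
  -- chain the ratio bound
  have step : ∀ m : ℕ, u (N + m) ≤ u N / v N * v (N + m) := by
    intro m
    induction m with
    | zero =>
      simp only [Nat.add_zero]
      rw [div_mul_cancel₀ _ (hvpos N).ne']
    | succ m ih =>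
      have h1 := key (N + m) (Nat.le_add_right N m)
      have h2 : u (N + m) / v (N + m) ≤ u N / v N :=
        (div_le_div_iff₀ (hvpos _) (hvpos _)).2 (by
          calc u (N + m) * v N ≤ (u N / v N * v (N + m)) * v N :=
                mul_le_mul_of_nonneg_right ih (hvpos N).le
            _ = u N * v (N + m) := by have := (hvpos N).ne'; field_simp)
      calc u (N + m + 1) ≤ u (N + m) / v (N + m) * v (N + m + 1) := h1
        _ ≤ u N / v N * v (N + m + 1) :=
            mul_le_mul_of_nonneg_right h2 (hvpos _).le
  refine ⟨(Finset.range (N+1)).sup' ⟨0, Finset.mem_range.2 (Nat.succ_pos _)⟩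
      (fun n => u n / v n), ?_, ?_⟩
  · have h0 : u 0 / v 0 = 1 := by
      simp [hu, hv, pochR_zero, Real.one_rpow]
    have hle := Finset.le_sup' (fun n => u n / v n)
      (Finset.mem_range.2 (Nat.succ_pos N) : 0 ∈ Finset.range (N+1))
    rw [h0] at hle
    linarith
  · intro n
    have hCn : ∀ k : ℕ, k ∈ Finset.range (N+1) → u k / v k ≤
        (Finset.range (N+1)).sup' ⟨0, Finset.mem_range.2 (Nat.succ_pos _)⟩
          (fun n => u n / v n) :=
      fun k hk => Finset.le_sup' (fun n => u n / v n) hk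
    have goal : u n / v n ≤ (Finset.range (N+1)).sup'
        ⟨0, Finset.mem_range.2 (Nat.succ_pos _)⟩ (fun n => u n / v n) := by
      rcases le_or_gt n N with h | h
      · exact hCn n (Finset.mem_range.2 (Nat.lt_succ_of_le h))
      · obtain ⟨m, rfl⟩ := Nat.exists_eq_add_of_le h.le
        have h1 : u (N + m) / v (N + m) ≤ u N / v N :=
          (div_le_div_iff₀ (hvpos _) (hvpos _)).2 (by
            calc u (N + m) * v N ≤ (u N / v N * v (N + m)) * v N :=
                  mul_le_mul_of_nonneg_right (step m) (hvpos N).le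
              _ = u N * v (N + m) := by have := (hvpos N).ne'; field_simp)
        exact h1.trans (hCn N (Finset.mem_range.2 (Nat.lt_succ_self N)))
    have hfin := (div_le_iff₀ (hvpos n)).1 goal
    calc |pochR a n| / n.factorial = u n := rfl
      _ ≤ _ * v n := hfin
      _ = _ * ((n : ℝ) + 1) ^ (-p) := rfl

lemma summable_aux_rpow (q : ℝ) (hq : 1 < q) :
    Summable (fun n : ℕ => ((n:ℝ) + 1) ^ (-q)) := by
  have h1 : Summable (fun n : ℕ => ((n:ℝ) ^ q)⁻¹) := Real.summable_nat_rpow_inv.2 hq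
  have h2 := (summable_nat_add_iff 1).2 h1
  refine h2.congr fun n => ?_
  push_cast
  rw [Real.rpow_neg (by positivity)]

lemma summable_pochR_abs_div_fact (a : ℝ) (ha : a < 0) :
    Summable (fun n : ℕ => |pochR a n| / n.factorial) := by
  obtain ⟨C, hC, hbound⟩ := pochR_abs_div_fact_le a ha
  have hδ : 0 < min 1 (-a) := lt_min one_pos (by linarith)
  have hsum : Summable (fun n : ℕ => C * ((n:ℝ)+1) ^ (-(1 + min 1 (-a)))) :=
    (summable_aux_rpow _ (by linarith)).mul_left C
  refine hsum.of_nonneg_of_le (fun n => ?_) (fun n => hbound n)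
  have h : (0:ℝ) < n.factorial := by exact_mod_cast n.factorial_pos
  exact div_nonneg (abs_nonneg _) h.le

lemma tendsto_pochR_succ_div_fact (a : ℝ) (ha : a < 0) :
    Filter.Tendsto (fun n : ℕ => pochR (a+1) n / n.factorial) Filter.atTop (nhds 0) := by
  obtain ⟨C, hC, hbound⟩ := pochR_abs_div_fact_le a ha
  have hδ : 0 < min 1 (-a) := lt_min one_pos (by linarith)
  have ha0 : a ≠ 0 := ne_of_lt ha
  set δ := min 1 (-a) with hδdef
  have key : ∀ n : ℕ, ‖pochR (a+1) n / n.factorial‖ ≤ (C/|a|) * ((n:ℝ)+2)^(-δ) := by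
    intro n
    have hfact : (0:ℝ) < n.factorial := by exact_mod_cast n.factorial_pos
    have hfact1 : (0:ℝ) < (n+1).factorial := by exact_mod_cast (n+1).factorial_pos
    have hb := hbound (n+1)
    have hx : (0:ℝ) < (n:ℝ)+2 := by positivity
    have e0 : (((n+1:ℕ):ℝ) + 1) = (n:ℝ)+2 := by push_cast; ring
    rw [e0] at hb
    have e1 : pochR (a+1) n = pochR a (n+1) / a := by
      rw [pochR_succ']; field_simp
    have h4 : |a| ≠ 0 := abs_ne_zero.2 ha0
    have h5 : (n.factorial:ℝ) ≠ 0 := hfact.ne'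
    have h6 : ((n:ℝ)+1) ≠ 0 := by positivity
    have e2 : ‖pochR (a+1) n / n.factorial‖ = (|pochR a (n+1)| / (n+1).factorial) *
        (((n:ℝ)+1) / |a|) := by
      rw [Real.norm_eq_abs, e1, Nat.factorial_succ, abs_div, abs_div, abs_of_pos hfact]
      push_cast
      field_simp
    rw [e2]
    have h3 : (|pochR a (n+1)| / (n+1).factorial) * (((n:ℝ)+1) / |a|) ≤
        (C * ((n:ℝ)+2)^(-(1+δ))) * (((n:ℝ)+2) / |a|) := by
      apply mul_le_mul hb _ (by positivity) (by positivity)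
      exact div_le_div₀ (by positivity) (by linarith) (abs_pos.2 ha0) le_rfl
    refine h3.trans (le_of_eq ?_)
    have e4 : -(1+δ)+1 = -δ := by ring
    have e3 : ((n:ℝ)+2)^(-δ) = ((n:ℝ)+2)^(-(1+δ)) * ((n:ℝ)+2) := by
      rw [← e4, Real.rpow_add_one hx.ne']
    rw [e3]
    ring
  have h1 : Filter.Tendsto (fun n : ℕ => ((n:ℝ)+2)) Filter.atTop Filter.atTop :=
    Filter.tendsto_atTop_add_const_right _ 2 tendsto_natCast_atTop_atTop
  have h2 := (tendsto_rpow_neg_atTop hδ).comp h1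
  have h3 := h2.const_mul (C/|a|)
  exact squeeze_zero_norm key (by simpa using h3)

lemma summable_pochR_div_fact (a : ℝ) (ha : a < 0) :
    Summable (fun n : ℕ => pochR a n / n.factorial) := by
  have h2 : Summable (fun n : ℕ => |pochR a n / n.factorial|) := by
    refine (summable_pochR_abs_div_fact a ha).congr fun n => ?_
    have h : (0:ℝ) < n.factorial := by exact_mod_cast n.factorial_pos
    rw [abs_div, abs_of_pos h]
  exact h2.of_abs

lemma hasSum_pochR_div_fact_zero (a : ℝ) (ha : a < 0) :
    HasSum (fun n : ℕ => pochR a n / n.factorial) 0 := by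
  have hsummable := summable_pochR_div_fact a ha
  have hps : ∀ N : ℕ, ∑ n ∈ Finset.range (N+1), pochR a n / n.factorial =
      pochR (a+1) N / N.factorial := by
    intro N
    induction N with
    | zero => simp [pochR_zero]
    | succ N ih =>
      rw [Finset.sum_range_succ, ih, pochR_succ (a+1) N, Nat.factorial_succ]
      have h5 : (N.factorial:ℝ) ≠ 0 := by exact_mod_cast N.factorial_pos.ne'
      have h6 : ((N:ℝ)+1) ≠ 0 := by positivity
      rw [pochR_succ']
      push_cast
      field_simp
      ring
  have h1 := hsummable.hasSum.tendsto_sum_nat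
  have h2 : Filter.Tendsto (fun N : ℕ => ∑ n ∈ Finset.range (N+1), pochR a n / n.factorial)
      Filter.atTop (nhds (∑' n, pochR a n / n.factorial)) :=
    h1.comp (Filter.tendsto_add_atTop_nat 1)
  have h3 : Filter.Tendsto (fun N : ℕ => ∑ n ∈ Finset.range (N+1), pochR a n / n.factorial)
      Filter.atTop (nhds 0) := by
    rw [funext hps]
    exact tendsto_pochR_succ_div_fact a ha
  have h4 : (∑' n, pochR a n / n.factorial) = 0 := tendsto_nhds_unique h2 h3
  exact h4 ▸ hsummable.hasSum

lemma pochR_abs_div_fact_bdd (a : ℝ) (ha : a < 0) :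
    ∃ C : ℝ, 0 < C ∧ ∀ n : ℕ, |pochR a n| / n.factorial ≤ C := by
  obtain ⟨C, hC, hbound⟩ := pochR_abs_div_fact_le a ha
  refine ⟨C, hC, fun n => (hbound n).trans ?_⟩
  have h1 : ((n:ℝ)+1) ^ (-(1 + min 1 (-a))) ≤ 1 := by
    apply Real.rpow_le_one_of_one_le_of_nonpos (by push_cast; linarith)
    have : (0:ℝ) < min 1 (-a) := lt_min one_pos (by linarith)
    linarith
  calc C * ((n:ℝ)+1) ^ (-(1 + min 1 (-a))) ≤ C * 1 :=
        mul_le_mul_of_nonneg_left h1 hC.le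
    _ = C := mul_one C

lemma summable_binomg (a : ℝ) (ha : a < 0) {y : ℝ} (hy : |y| ≤ 1) :
    Summable (fun n : ℕ => pochR a n * y ^ n / n.factorial) := by
  refine Summable.of_norm_bounded (summable_pochR_abs_div_fact a ha) fun n => ?_
  have hfact : (0:ℝ) < n.factorial := by exact_mod_cast n.factorial_pos
  rw [Real.norm_eq_abs, abs_div, abs_mul, abs_pow, abs_of_pos hfact]
  have h1 : |y| ^ n ≤ 1 := pow_le_one₀ (abs_nonneg y) hy
  refine div_le_div₀ (abs_nonneg _) ?_ hfact le_rfl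
  exact (mul_le_mul_of_nonneg_left h1 (abs_nonneg _)).trans_eq (mul_one _)

lemma summable_binomg' (a : ℝ) (ha : a < 0) {y : ℝ} (hy : |y| < 1) :
    Summable (fun n : ℕ => pochR a n * ((n:ℝ) * y ^ (n-1)) / n.factorial) := by
  obtain ⟨C, hC, hbdd⟩ := pochR_abs_div_fact_bdd a ha
  set r : ℝ := (|y| + 1)/2 with hr
  have hr0 : 0 < r := by positivity
  have hyr : |y| < r := by rw [hr]; linarith
  have hr1 : r < 1 := by rw [hr]; linarith
  have hsum : Summable (fun n : ℕ => (C/r) * ((n:ℝ) ^ (1:ℕ) * r ^ n)) := by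
    refine Summable.mul_left _ (summable_pow_mul_geometric_of_norm_lt_one 1 ?_)
    rw [Real.norm_eq_abs, abs_of_pos hr0]; exact hr1
  refine Summable.of_norm_bounded hsum fun n => ?_
  have hfact : (0:ℝ) < n.factorial := by exact_mod_cast n.factorial_pos
  rw [Real.norm_eq_abs, abs_div, abs_mul, abs_mul, abs_of_pos hfact,
    abs_of_nonneg (by positivity : (0:ℝ) ≤ (n:ℕ)), abs_pow]
  match n with
  | 0 => simp [hC.le, hr0.le]
  | (m+1) =>
    have hb := hbdd (m+1)
    have hfact1 : (0:ℝ) < (m+1).factorial := by exact_mod_cast (m+1).factorial_pos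
    have h2 : |y| ^ (m+1-1) ≤ r ^ m := by
      simpa using pow_le_pow_left₀ (abs_nonneg y) hyr.le m
    calc |pochR a (m+1)| * (((m+1:ℕ):ℝ) * |y| ^ (m+1-1)) / (m+1).factorial
        = (|pochR a (m+1)| / (m+1).factorial) * (((m+1:ℕ):ℝ) * |y| ^ (m+1-1)) := by
          ring
      _ ≤ C * (((m+1:ℕ):ℝ) * r ^ m) := by
          apply mul_le_mul hb ?_ (by positivity) hC.le
          exact mul_le_mul_of_nonneg_left h2 (by positivity)
      _ = (C/r) * (((m+1:ℕ):ℝ) ^ (1:ℕ) * r ^ (m+1)) := by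
          rw [pow_succ]
          field_simp
          ring

lemma binomial_hasSum (a : ℝ) (ha : a < 0) {x : ℝ} (hx : |x| < 1) :
    HasSum (fun n : ℕ => pochR a n * x ^ n / n.factorial) ((1 - x) ^ (-a)) := by
  have hsummx := summable_binomg a ha hx.le
  suffices hsuf : (∑' n : ℕ, pochR a n * x ^ n / n.factorial) = (1 - x) ^ (-a) by
    rw [← hsuf]; exact hsummx.hasSum
  set f : ℝ → ℝ := fun y => ∑' n : ℕ, pochR a n * y ^ n / n.factorial with hfdef
  set D : ℝ → ℝ := fun y => ∑' n : ℕ, pochR a n * ((n:ℝ) * y ^ (n-1)) / n.factorial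
    with hDdef
  set r : ℝ := (|x| + 1)/2 with hr
  have hr0 : 0 < r := by positivity
  have hxr : |x| < r := by rw [hr]; linarith
  have hr1 : r < 1 := by rw [hr]; linarith
  set t : Set ℝ := Set.Ioo (-r) r with ht
  have hxt : x ∈ t := by rw [ht]; exact ⟨neg_lt_of_abs_lt hxr, lt_of_abs_lt hxr⟩
  have h0t : (0:ℝ) ∈ t := by rw [ht]; constructor <;> [linarith; linarith]
  have hyabs : ∀ y ∈ t, |y| < 1 := fun y hy => by
    rw [ht] at hy; rw [abs_lt]; exact ⟨by linarith [hy.1], by linarith [hy.2]⟩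
  obtain ⟨C, hC, hbdd⟩ := pochR_abs_div_fact_bdd a ha
  have hu' : Summable (fun n : ℕ => (C/r) * ((n:ℝ) ^ (1:ℕ) * r ^ n)) := by
    refine Summable.mul_left _ (summable_pow_mul_geometric_of_norm_lt_one 1 ?_)
    rw [Real.norm_eq_abs, abs_of_pos hr0]; exact hr1
  have hbound : ∀ (n : ℕ), ∀ y ∈ t, ‖pochR a n * ((n:ℝ) * y ^ (n-1)) / n.factorial‖ ≤
      (C/r) * ((n:ℝ) ^ (1:ℕ) * r ^ n) := by
    intro n y hy
    have hyr : |y| ≤ r := by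
      rw [ht] at hy; rw [abs_le]; exact ⟨(hy.1).le, (hy.2).le⟩
    have hfact : (0:ℝ) < n.factorial := by exact_mod_cast n.factorial_pos
    rw [Real.norm_eq_abs, abs_div, abs_mul, abs_mul, abs_of_pos hfact,
      abs_of_nonneg (by positivity : (0:ℝ) ≤ (n:ℕ)), abs_pow]
    match n with
    | 0 => simp [hC.le, hr0.le]
    | (m+1) =>
      have hb := hbdd (m+1)
      have hfact1 : (0:ℝ) < (m+1).factorial := by exact_mod_cast (m+1).factorial_pos
      have h2 : |y| ^ (m+1-1) ≤ r ^ m := by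
        simpa using pow_le_pow_left₀ (abs_nonneg y) hyr m
      calc |pochR a (m+1)| * (((m+1:ℕ):ℝ) * |y| ^ (m+1-1)) / (m+1).factorial
          = (|pochR a (m+1)| / (m+1).factorial) * (((m+1:ℕ):ℝ) * |y| ^ (m+1-1)) := by
            ring
        _ ≤ C * (((m+1:ℕ):ℝ) * r ^ m) := by
            apply mul_le_mul hb ?_ (by positivity) hC.le
            exact mul_le_mul_of_nonneg_left h2 (by positivity)
        _ = (C/r) * (((m+1:ℕ):ℝ) ^ (1:ℕ) * r ^ (m+1)) := by
            rw [pow_succ]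
            field_simp
            ring
  have hg : ∀ (n : ℕ), ∀ y ∈ t, HasDerivAt (fun z => pochR a n * z ^ n / n.factorial)
      (pochR a n * ((n:ℝ) * y ^ (n-1)) / n.factorial) y := fun n y _ =>
    ((hasDerivAt_pow n y).const_mul _).div_const _
  have hD : ∀ y ∈ t, HasDerivAt f (D y) y := by
    intro y hy
    exact hasDerivAt_tsum_of_isPreconnected hu' isOpen_Ioo
      ((convex_Ioo _ _).isPreconnected) hg hbound h0t
      (summable_binomg a ha (by simp)) hy
  have hODE : ∀ y ∈ t, D y = a * f y / (1 - y) := by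
    intro y hy
    have hy1 : |y| < 1 := hyabs y hy
    have h1y : (0:ℝ) < 1 - y := by have := (abs_lt.1 hy1).2; linarith
    have S0 : HasSum (fun n : ℕ => pochR a n * y ^ n / n.factorial) (f y) :=
      (summable_binomg a ha hy1.le).hasSum
    have Sd : HasSum (fun n : ℕ => pochR a n * ((n:ℝ) * y ^ (n-1)) / n.factorial) (D y) :=
      (summable_binomg' a ha hy1).hasSum
    have E1 : HasSum (fun m : ℕ => pochR a (m+1) * y ^ m / m.factorial) (D y) := by
      have h := (hasSum_nat_add_iff'
        (f := fun n : ℕ => pochR a n * ((n:ℝ) * y ^ (n-1)) / n.factorial) 1).2 Sd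
      simp only [Finset.range_one, Finset.sum_singleton, Nat.cast_zero, zero_mul,
        mul_zero, zero_div, sub_zero] at h
      have hfe : (fun n : ℕ => pochR a (n+1) * (((n+1:ℕ):ℝ) * y ^ (n+1-1)) / (n+1).factorial)
          = fun m : ℕ => pochR a (m+1) * y ^ m / m.factorial := by
        funext m
        have h5 : (m.factorial:ℝ) ≠ 0 := by exact_mod_cast m.factorial_pos.ne'
        rw [Nat.factorial_succ]
        push_cast
        field_simp
      rwa [hfe] at h
    have E2 : HasSum (fun m : ℕ => pochR a (m+1) * y ^ m / m.factorial)
        (a * f y + y * D y) := by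
      have h := (S0.mul_left a).add (Sd.mul_left y)
      have hfe : (fun m : ℕ => a * (pochR a m * y ^ m / m.factorial) +
          y * (pochR a m * ((m:ℝ) * y ^ (m-1)) / m.factorial))
          = fun m : ℕ => pochR a (m+1) * y ^ m / m.factorial := by
        funext m
        match m with
        | 0 => simp [pochR_succ, pochR_zero]
        | (k+1) =>
          have h5 : ((k+1).factorial:ℝ) ≠ 0 := by exact_mod_cast (k+1).factorial_pos.ne'
          rw [pochR_succ a (k+1)]
          have hpow : y * y ^ (k+1-1) = y ^ (k+1) := by
            simp [pow_succ, mul_comm]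
          push_cast
          field_simp
          ring
      rwa [hfe] at h
    have hDe : D y = a * f y + y * D y := E1.unique E2
    rw [eq_div_iff h1y.ne']
    calc D y * (1 - y) = D y - y * D y := by ring
      _ = a * f y := by linarith [hDe]
  have hφ : ∀ y ∈ t, HasDerivAt (fun z => f z * (1 - z) ^ a) 0 y := by
    intro y hy
    have hy1 : |y| < 1 := hyabs y hy
    have h1y : (0:ℝ) < 1 - y := by have := (abs_lt.1 hy1).2; linarith
    have hbase : HasDerivAt (fun z : ℝ => 1 - z) (-1) y := by
      simpa using (hasDerivAt_id y).const_sub 1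
    have houter := Real.hasDerivAt_rpow_const (x := 1 - y) (p := a) (Or.inl h1y.ne')
    have hrp : HasDerivAt (fun z : ℝ => (1 - z) ^ a) ((a * (1-y) ^ (a-1)) * (-1)) y := by
      have := HasDerivAt.comp y houter hbase
      exact this
    have hmul := (hD y hy).mul hrp
    have e : (1-y) ^ (a-1) = (1-y) ^ a / (1-y) := by
      rw [Real.rpow_sub h1y, Real.rpow_one]
    have hval : D y * (1 - y) ^ a + f y * ((a * (1-y) ^ (a-1)) * (-1)) = 0 := by
      rw [hODE y hy, e]
      field_simp
      ring
    exact hmul.congr_deriv hval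
  have hconst := Convex.norm_image_sub_le_of_norm_hasDerivWithin_le
    (f' := fun _ => (0:ℝ)) (C := 0)
    (fun y hy => (hφ y hy).hasDerivWithinAt) (fun y _ => by simp)
    (convex_Ioo _ _) h0t hxt
  have hφeq : f x * (1 - x) ^ a = f 0 * (1 - 0) ^ a := by
    rw [zero_mul] at hconst
    have := norm_sub_eq_zero_iff.1 (le_antisymm hconst (norm_nonneg _))
    exact this
  have hf0 : f 0 = 1 := by
    have hsingle : HasSum (fun n : ℕ => pochR a n * (0:ℝ) ^ n / n.factorial)
        (pochR a 0 * (0:ℝ) ^ 0 / (Nat.factorial 0)) :=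
      hasSum_single 0 (fun b hb => by simp [zero_pow hb])
    have h1 : pochR a 0 * (0:ℝ) ^ 0 / (Nat.factorial 0) = 1 := by
      simp [pochR_zero]
    rw [h1] at hsingle
    exact hsingle.tsum_eq
  have h1x : (0:ℝ) < 1 - x := by have := (abs_lt.1 hx).2; linarith
  have hpos : (0:ℝ) < (1-x) ^ a := Real.rpow_pos_of_pos h1x a
  rw [hf0, sub_zero, Real.one_rpow, mul_one] at hφeq
  have : f x = ((1-x) ^ a)⁻¹ := by
    field_simp at hφeq ⊢
    linarith [hφeq]
  rw [Real.rpow_neg h1x.le]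
  exact this

lemma integral_Ioo_rpow_one_sub (b s : ℝ) (hb : 0 < b) (hs : 0 < s) :
    ∫ x in Set.Ioo (0:ℝ) 1, x ^ (b-1) * (1-x) ^ (s-1) =
      Real.Gamma b * Real.Gamma s / Real.Gamma (b + s) := by
  have h := Complex.Gamma_mul_Gamma_eq_betaIntegral (s := (b:ℂ)) (t := (s:ℂ))
    (by simpa using hb) (by simpa using hs)
  have hbeta : Complex.betaIntegral (b:ℂ) (s:ℂ) =
      ((∫ x in Set.Ioo (0:ℝ) 1, x ^ (b-1) * (1-x) ^ (s-1) : ℝ) : ℂ) := by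
    rw [Complex.betaIntegral, intervalIntegral.integral_of_le zero_le_one,
      MeasureTheory.integral_Ioc_eq_integral_Ioo]
    calc ∫ t in Set.Ioo (0:ℝ) 1, (t:ℂ) ^ ((b:ℂ)-1) * (1-(t:ℂ)) ^ ((s:ℂ)-1)
        = ∫ t in Set.Ioo (0:ℝ) 1, ((t ^ (b-1) * (1-t) ^ (s-1) : ℝ) : ℂ) := by
          refine MeasureTheory.setIntegral_congr_fun measurableSet_Ioo fun x hx => ?_
          obtain ⟨hx0, hx1⟩ := hx
          rw [Complex.ofReal_mul, Complex.ofReal_cpow hx0.le,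
            Complex.ofReal_cpow (by linarith : (0:ℝ) ≤ 1 - x)]
          push_cast
          ring
      _ = _ := integral_ofReal
  rw [hbeta] at h
  have hG : ∀ u : ℝ, Complex.Gamma (u:ℂ) = (Real.Gamma u : ℂ) := Complex.Gamma_ofReal
  rw [hG b, hG s, show ((b:ℂ) + (s:ℂ)) = ((b + s : ℝ) : ℂ) by push_cast; ring, hG (b+s)]
    at h
  have h2 : Real.Gamma b * Real.Gamma s =
      Real.Gamma (b+s) * ∫ x in Set.Ioo (0:ℝ) 1, x ^ (b-1) * (1-x) ^ (s-1) := by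
    exact_mod_cast h
  have hGpos : 0 < Real.Gamma (b+s) := Real.Gamma_pos_of_pos (by linarith)
  rw [h2]
  field_simp

lemma hasSum_pochR_beta (a b : ℝ) (ha : a < 0) (hb : 0 < b) :
    HasSum (fun n : ℕ => pochR a n / ((b + n) * n.factorial))
      (Real.Gamma b * Real.Gamma (1-a) / Real.Gamma (b + (1-a))) := by
  set μ := MeasureTheory.volume.restrict (Set.Ioo (0:ℝ) 1) with hμ
  set F : ℕ → ℝ → ℝ := fun n x => (pochR a n / n.factorial) * x ^ (b - 1 + (n:ℝ)) with hF
  have hq : ∀ n : ℕ, (-1:ℝ) < b - 1 + n := fun n => by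
    have := Nat.cast_nonneg (α := ℝ) n; linarith
  have hbn : ∀ n : ℕ, (0:ℝ) < b + n := fun n => by
    have := Nat.cast_nonneg (α := ℝ) n; linarith
  have hint_rpow : ∀ n : ℕ,
      MeasureTheory.IntegrableOn (fun x : ℝ => x ^ (b - 1 + (n:ℝ))) (Set.Ioo (0:ℝ) 1) := by
    intro n
    have h1 := intervalIntegral.intervalIntegrable_rpow' (a := 0) (b := 1) (hq n)
    rw [intervalIntegrable_iff_integrableOn_Ioc_of_le zero_le_one] at h1
    exact h1.mono_set Set.Ioo_subset_Ioc_self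
  have hJ : ∀ n : ℕ, (∫ x in Set.Ioo (0:ℝ) 1, x ^ (b - 1 + (n:ℝ))) = 1/(b + n) := by
    intro n
    have h1 : (∫ x in (0:ℝ)..1, x ^ (b - 1 + (n:ℝ))) =
        ((1:ℝ) ^ (b - 1 + (n:ℝ) + 1) - (0:ℝ) ^ (b - 1 + (n:ℝ) + 1)) / (b - 1 + (n:ℝ) + 1) :=
      integral_rpow (Or.inl (hq n))
    rw [intervalIntegral.integral_of_le zero_le_one,
      MeasureTheory.integral_Ioc_eq_integral_Ioo] at h1
    have hne : b - 1 + (n:ℝ) + 1 ≠ 0 := by have := hbn n; intro h; apply this.ne'; linarith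
    rw [h1, Real.one_rpow, Real.zero_rpow hne]
    rw [show b - 1 + (n:ℝ) + 1 = b + n by ring]
    norm_num
  have hFint : ∀ n : ℕ, MeasureTheory.Integrable (F n) μ := fun n =>
    ((hint_rpow n).const_mul _)
  have hfacts : ∀ n : ℕ, (0:ℝ) < n.factorial := fun n => by exact_mod_cast n.factorial_pos
  have hFnorm : ∀ n : ℕ, (∫ x, ‖F n x‖ ∂μ) = (|pochR a n| / n.factorial) * (1/(b+n)) := by
    intro n
    have h1 : (∫ x, ‖F n x‖ ∂μ) =
        ∫ x in Set.Ioo (0:ℝ) 1, (|pochR a n| / n.factorial) * x ^ (b - 1 + (n:ℝ)) := by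
      refine MeasureTheory.setIntegral_congr_fun measurableSet_Ioo fun x hx => ?_
      have hx0 : 0 < x := hx.1
      rw [hF]
      simp only [Real.norm_eq_abs, abs_mul, abs_div]
      rw [abs_of_pos (hfacts n), abs_of_pos (Real.rpow_pos_of_pos hx0 _)]
    rw [h1, MeasureTheory.integral_const_mul, hJ n]
  have hsumnorm : Summable (fun n : ℕ => ∫ x, ‖F n x‖ ∂μ) := by
    rw [funext hFnorm]
    have hmaj : Summable (fun n : ℕ => (|pochR a n| / n.factorial) * (1/b)) :=
      (summable_pochR_abs_div_fact a ha).mul_right _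
    refine hmaj.of_nonneg_of_le (fun n => ?_) (fun n => ?_)
    · have := hbn n
      positivity
    · refine mul_le_mul_of_nonneg_left ?_ (by positivity)
      exact one_div_le_one_div_of_le hb (by have := Nat.cast_nonneg (α := ℝ) n; linarith)
  have hsum := MeasureTheory.hasSum_integral_of_summable_integral_norm hFint hsumnorm
  have hint_eq : ∀ n : ℕ, (∫ x, F n x ∂μ) = pochR a n / ((b + n) * n.factorial) := by
    intro n
    rw [hF]
    simp only
    rw [MeasureTheory.integral_const_mul, hJ n, div_mul_div_comm, mul_one, mul_comm]
  have htsum_eq : (∫ x, (∑' n, F n x) ∂μ) =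
      ∫ x in Set.Ioo (0:ℝ) 1, x ^ (b-1) * (1-x) ^ ((1-a)-1) := by
    refine MeasureTheory.setIntegral_congr_fun measurableSet_Ioo fun x hx => ?_
    obtain ⟨hx0, hx1⟩ := hx
    have hxabs : |x| < 1 := by rw [abs_of_pos hx0]; exact hx1
    have hbs := (binomial_hasSum a ha hxabs).mul_left (x ^ (b-1))
    have hfe : (fun n : ℕ => x ^ (b-1) * (pochR a n * x ^ n / n.factorial)) = fun n => F n x := by
      funext n
      rw [hF]
      simp only
      rw [Real.rpow_add hx0, Real.rpow_natCast]
      ring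
    rw [hfe] at hbs
    rw [hbs.tsum_eq, show (1-a)-1 = -a by ring]
  rw [funext hint_eq, htsum_eq, integral_Ioo_rpow_one_sub b (1-a) hb (by linarith)] at hsum
  exact hsum

/-- Lemma 1(2). -/
theorem lemma1_part2 (a b c : ℝ) (ha : a < 0) (hb : 0 < b) (hc : 0 < c)
    (hbc : b ≠ c) :
    HasSum
      (fun n : ℕ => (n + 1 : ℝ) ^ 2 * pochR a n * pochR b n * pochR c n /
        (pochR (b + 1) n * pochR (c + 1) n * (n.factorial : ℝ)))
      (b * c * Real.Gamma (1 - a) / (c - b) *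
        ((1 - b) ^ 2 * Real.Gamma b / Real.Gamma (1 - a + b) -
         (1 - c) ^ 2 * Real.Gamma c / Real.Gamma (1 - a + c))) := by
  have hA := hasSum_pochR_div_fact_zero a ha
  have hB := hasSum_pochR_beta a b ha hb
  have hC := hasSum_pochR_beta a c ha hc
  have h1 := (hA.add (hB.mul_left ((1-b)^2/(c-b)))).sub (hC.mul_left ((1-c)^2/(c-b)))
  have h2 := h1.mul_left (b*c)
  have hcb : c - b ≠ 0 := sub_ne_zero.2 (Ne.symm hbc)
  have hterm : ∀ n : ℕ,
      (b*c) * ((pochR a n / n.factorial +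
          (1-b)^2/(c-b) * (pochR a n / ((b + n) * n.factorial))) -
          (1-c)^2/(c-b) * (pochR a n / ((c + n) * n.factorial)))
        = (n + 1 : ℝ) ^ 2 * pochR a n * pochR b n * pochR c n /
          (pochR (b + 1) n * pochR (c + 1) n * (n.factorial : ℝ)) := by
    intro n
    have hbn : (0:ℝ) < b + n := by have := Nat.cast_nonneg (α := ℝ) n; linarith
    have hcn : (0:ℝ) < c + n := by have := Nat.cast_nonneg (α := ℝ) n; linarith
    have hfact : (0:ℝ) < n.factorial := by exact_mod_cast n.factorial_pos
    have hPb : 0 < pochR (b+1) n := pochR_pos (by linarith) n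
    have hPc : 0 < pochR (c+1) n := pochR_pos (by linarith) n
    have eb : pochR b n = b * pochR (b+1) n / (b + n) := by
      rw [eq_div_iff hbn.ne', ← pochR_succ, pochR_succ']
    have ec : pochR c n = c * pochR (c+1) n / (c + n) := by
      rw [eq_div_iff hcn.ne', ← pochR_succ, pochR_succ']
    rw [eb, ec]
    field_simp
    ring
  have hval : (b*c) * ((0 + (1-b)^2/(c-b) *
        (Real.Gamma b * Real.Gamma (1-a) / Real.Gamma (b + (1-a)))) -
        (1-c)^2/(c-b) * (Real.Gamma c * Real.Gamma (1-a) / Real.Gamma (c + (1-a))))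
      = b * c * Real.Gamma (1 - a) / (c - b) *
        ((1 - b) ^ 2 * Real.Gamma b / Real.Gamma (1 - a + b) -
         (1 - c) ^ 2 * Real.Gamma c / Real.Gamma (1 - a + c)) := by
    rw [show b + (1-a) = 1-a+b by ring, show c + (1-a) = 1-a+c by ring]
    ring
  rw [funext hterm] at h2
  rw [hval] at h2
  exact h2

end
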